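/- Let r ≥ 1, n ≥ r + 2, and let a, b ∈ M₂(ℂ) be Hermitian matrices such that 𝟙, a, b are linearly independent. Let ℒ₀ be a Lindblad generator on M₂(ℂ)^{⊗r} and let ℒ_j denote its translate acting on sites j,…,j+r−1 of the n-qubit ring. If ℒ_j(a_k) = 0 and ℒ_j(b_k) = 0 for all sites j, k ∈ ZMod n (local conservation of both translationally invariant 1-local operators), then ℒ₀ = 0. (It is impossible to locally conserve two linearly independent non-identity 1-site operators by a nontrivial translationally invariant r-local Lindblad equation.) -/

import Mathlib

open Matrix Complex

noncomputable section

/-- Pauli matrices. -/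
def σx : Matrix (Fin 2) (Fin 2) ℂ := !![0, 1; 1, 0]
def σy : Matrix (Fin 2) (Fin 2) ℂ := !![0, -Complex.I; Complex.I, 0]
def σz : Matrix (Fin 2) (Fin 2) ℂ := !![1, 0; 0, -1]

/-- Operators on `r` qubits: the `r`-fold tensor power of `M₂(ℂ)`. -/
abbrev QOp (r : ℕ) := Matrix (Fin r → Fin 2) (Fin r → Fin 2) ℂ

/-- Operators on a ring of `n` qubits. -/
abbrev ROp (n : ℕ) := Matrix (ZMod n → Fin 2) (ZMod n → Fin 2) ℂ

/-- The Lindblad dissipator `D_L(ρ) = [Lρ, L†] + [L, ρL†]`. -/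
def dissipator {I : Type*} [Fintype I] (L ρ : Matrix I I ℂ) : Matrix I I ℂ :=
  (L * ρ * Lᴴ - Lᴴ * (L * ρ)) + (L * (ρ * Lᴴ) - ρ * Lᴴ * L)

/-- `𝓛` is a Lindblad generator: `𝓛(ρ) = i(ρH − Hρ) + Σ_k D_{L_k}(ρ)` for a Hermitian `H`
and a finite family of Lindblad operators. -/
def IsLindblad {I : Type*} [Fintype I] (𝓛 : Matrix I I ℂ → Matrix I I ℂ) : Prop :=
  ∃ H : Matrix I I ℂ, H.IsHermitian ∧ ∃ (m : ℕ) (Ls : Fin m → Matrix I I ℂ),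
    ∀ ρ, 𝓛 ρ = Complex.I • (ρ * H - H * ρ) + ∑ k, dissipator (Ls k) ρ

/-- Tensor (Kronecker) product of two single-qubit operators, as a two-qubit operator. -/
def kron2 (A B : Matrix (Fin 2) (Fin 2) ℂ) : QOp 2 :=
  Matrix.of fun x y => A (x 0) (y 0) * B (x 1) (y 1)

/-- Tensor product of `m` single-qubit operators. -/
def kronPow {m : ℕ} (f : Fin m → Matrix (Fin 2) (Fin 2) ℂ) : QOp m :=
  Matrix.of fun x y => ∏ i, f i (x i) (y i)

variable {n : ℕ}

/-- `b` acting on the `r` consecutive sites `j, j+1, …, j+r−1` (mod `n`) of the ring,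
and as identity on all other sites. -/
def embWin [NeZero n] (r : ℕ) (j : ZMod n) (b : QOp r) : ROp n :=
  Matrix.of fun x y =>
    (∏ s : ZMod n, if ∃ i : Fin r, s = j + (i.val : ZMod n) then (1 : ℂ)
      else if x s = y s then 1 else 0) *
    b (fun i => x (j + (i.val : ZMod n))) (fun i => y (j + (i.val : ZMod n)))

/-- Replace the values of a ring configuration on the window `j,…,j+r−1` by `u`. -/
def patch (r : ℕ) (j : ZMod n) (x : ZMod n → Fin 2) (u : Fin r → Fin 2) : ZMod n → Fin 2 :=
  fun s => if h : ∃ i : Fin r, s = j + (i.val : ZMod n) then u h.choose else x s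

/-- The (linear) map `𝓛` on `r`-site operators, acting as `𝓛` on the tensor factors of the
sites `j,…,j+r−1` of the ring and as the identity map on all other tensor factors. -/
def embMap [NeZero n] (r : ℕ) (j : ZMod n) (𝓛 : QOp r → QOp r) (M : ROp n) : ROp n :=
  Matrix.of fun x y =>
    (∏ s : ZMod n, if ∃ i : Fin r, s = j + (i.val : ZMod n) then (1 : ℂ)
      else if x s = y s then 1 else 0) *
    𝓛 (Matrix.of fun u u' => M (patch r j x u) (patch r j y u'))
      (fun i => x (j + (i.val : ZMod n))) (fun i => y (j + (i.val : ZMod n)))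

/-- A single-qubit operator `b` acting on site `k` of the ring, identity elsewhere. -/
def embSite [NeZero n] (k : ZMod n) (b : Matrix (Fin 2) (Fin 2) ℂ) : ROp n :=
  Matrix.of fun x y =>
    (∏ s : ZMod n, if s = k then (1 : ℂ) else if x s = y s then 1 else 0) * b (x k) (y k)

/-- A (linear) map `𝓛` on single-qubit operators acting on site `j` of the ring,
identity map on all other tensor factors. -/
def embMapSite [NeZero n] (j : ZMod n)
    (𝓛 : Matrix (Fin 2) (Fin 2) ℂ → Matrix (Fin 2) (Fin 2) ℂ) (M : ROp n) : ROp n :=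
  Matrix.of fun x y =>
    (∏ s : ZMod n, if s = j then (1 : ℂ) else if x s = y s then 1 else 0) *
    𝓛 (Matrix.of fun u u' => M (Function.update x j u) (Function.update y j u')) (x j) (y j)

namespace Stmt5

abbrev M2 := Matrix (Fin 2) (Fin 2) ℂ

variable {r : ℕ}

/-- `c` at site `i` of the window, identity elsewhere. -/
def emb1 (i : Fin r) (c : M2) : QOp r :=
  Matrix.of fun u v =>
    (∏ j : Fin r, if j = i then (1 : ℂ) else if u j = v j then 1 else 0) * c (u i) (v i)

lemma delta_prod (u v : Fin r → Fin 2) :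
    (∏ j : Fin r, if u j = v j then (1:ℂ) else 0) = if u = v then 1 else 0 := by
  by_cases h : u = v
  · simp [h]
  · obtain ⟨j, hj⟩ := Function.ne_iff.mp h
    rw [if_neg h]
    exact Finset.prod_eq_zero (Finset.mem_univ j) (if_neg hj)

lemma delta_prod' (i : Fin r) (u v : Fin r → Fin 2) :
    (∏ j : Fin r, if j = i then (1:ℂ) else if u j = v j then 1 else 0)
      = if (∀ j, j ≠ i → u j = v j) then 1 else 0 := by
  by_cases h : ∀ j, j ≠ i → u j = v j
  · rw [if_pos h]
    apply Finset.prod_eq_one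
    intro j _
    by_cases hj : j = i
    · simp [hj]
    · simp [hj, h j hj]
  · push_neg at h
    obtain ⟨j, hj, hne⟩ := h
    rw [if_neg (by push_neg; exact ⟨j, hj, hne⟩)]
    refine Finset.prod_eq_zero (Finset.mem_univ j) ?_
    rw [if_neg hj, if_neg hne]

lemma emb1_apply (i : Fin r) (c : M2) (u v : Fin r → Fin 2) :
    emb1 i c u v = (if (∀ j, j ≠ i → u j = v j) then (1:ℂ) else 0) * c (u i) (v i) := by
  rw [emb1, Matrix.of_apply, delta_prod']

lemma emb1_one (i : Fin r) : emb1 i (1 : M2) = 1 := by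
  ext u v
  rw [emb1_apply, Matrix.one_apply, Matrix.one_apply]
  by_cases h : u = v
  · subst h; simp
  · obtain ⟨j, hj⟩ := Function.ne_iff.mp h
    rw [if_neg h]
    by_cases hji : j = i
    · subst hji
      rw [if_neg hj, mul_zero]
    · rw [if_neg (by intro hall; exact hj (hall j hji)), zero_mul]

lemma emb1_add (i : Fin r) (c d : M2) : emb1 i (c + d) = emb1 i c + emb1 i d := by
  ext u v; simp [emb1_apply, mul_add]

lemma emb1_smul (i : Fin r) (z : ℂ) (c : M2) : emb1 i (z • c) = z • emb1 i c := by
  ext u v; simp [emb1_apply]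

lemma emb1_zero (i : Fin r) : emb1 i (0 : M2) = 0 := by
  ext u v; simp [emb1_apply]

lemma emb1_sub (i : Fin r) (c d : M2) : emb1 i (c - d) = emb1 i c - emb1 i d := by
  ext u v; simp [emb1_apply, mul_sub]

lemma update_mem_aux {u w : Fin r → Fin 2} {i : Fin r} (h : ∀ j, j ≠ i → u j = w j) :
    w = Function.update u i (w i) := by
  funext j
  by_cases hj : j = i
  · subst hj; simp
  · rw [Function.update_of_ne hj]; exact (h j hj).symm

lemma emb1_mul (i : Fin r) (c d : M2) : emb1 i c * emb1 i d = emb1 i (c * d) := by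
  ext u v
  rw [Matrix.mul_apply, emb1_apply, Matrix.mul_apply]
  have hsum : ∀ w : Fin r → Fin 2,
      emb1 i c u w * emb1 i d w v =
        if w = Function.update u i (w i) then
          (if (∀ j, j ≠ i → u j = v j) then (1:ℂ) else 0) * (c (u i) (w i) * d (w i) (v i))
        else 0 := by
    intro w
    rw [emb1_apply, emb1_apply]
    by_cases h1 : ∀ j, j ≠ i → u j = w j
    · rw [if_pos (update_mem_aux h1), if_pos h1, one_mul]
      by_cases h2 : ∀ j, j ≠ i → w j = v j
      · rw [if_pos h2, if_pos (fun j hj => (h1 j hj).trans (h2 j hj))]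
        ring
      · rw [if_neg h2, zero_mul, mul_zero]
        rw [if_neg (by intro hall; exact h2 (fun j hj => ((h1 j hj).symm.trans (hall j hj)))), zero_mul]
    · rw [if_neg h1, zero_mul, zero_mul]
      rw [if_neg (by intro hw; exact h1 (fun j hj => by rw [hw, Function.update_of_ne hj]))]
  rw [Finset.sum_congr rfl (fun w _ => hsum w)]
  have hmem : ∀ w : Fin r → Fin 2,
      (w = Function.update u i (w i)) ↔ w ∈ Finset.univ.image (Function.update u i) := by
    intro w
    constructor
    · intro h; exact Finset.mem_image.mpr ⟨w i, Finset.mem_univ _, h.symm⟩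
    · rintro h
      obtain ⟨t, -, rfl⟩ := Finset.mem_image.mp h
      rw [Function.update_self]
  rw [Finset.sum_congr rfl (fun w _ => if_congr (hmem w) rfl rfl)]
  rw [Finset.sum_ite_mem, Finset.univ_inter,
    Finset.sum_image (fun x _ y _ h => Function.update_injective u i h)]
  rw [Finset.mul_sum]
  refine Finset.sum_congr rfl (fun t _ => ?_)
  rw [Function.update_self]


section Comm

lemma stdBasisMatrix_apply' (s t a b : Fin 2) :
    Matrix.single s t (1:ℂ) a b = if s = a ∧ t = b then 1 else 0 := rfl

lemma comm_entry (X : QOp r) (i : Fin r) (s t : Fin 2)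
    (h : X * emb1 i (Matrix.single s t 1) = emb1 i (Matrix.single s t 1) * X)
    (u v : Fin r → Fin 2) :
    (if v i = t then X u (Function.update v i s) else 0)
      = if u i = s then X (Function.update u i t) v else 0 := by
  have h' := congrFun (congrFun h u) v
  rw [Matrix.mul_apply, Matrix.mul_apply] at h'
  have hL : (∑ w, X u w * emb1 i (Matrix.single s t 1) w v)
      = if v i = t then X u (Function.update v i s) else 0 := by
    rw [Finset.sum_eq_single (Function.update v i s)]
    · rw [emb1_apply, if_pos (fun j hj => Function.update_of_ne hj _ _),
        Function.update_self, stdBasisMatrix_apply']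
      rcases eq_or_ne (v i) t with hvt | hvt
      · rw [if_pos ⟨rfl, hvt.symm⟩, if_pos hvt, one_mul, mul_one]
      · rw [if_neg (by rintro ⟨-, h2⟩; exact hvt h2.symm), if_neg hvt]
        simp
    · intro w _ hw
      rw [emb1_apply]
      by_cases h1 : ∀ j, j ≠ i → w j = v j
      · by_cases h2 : w i = s
        · have hthis := update_mem_aux (fun j hj => (h1 j hj).symm)
          rw [h2] at hthis
          exact absurd hthis hw
        · rw [if_pos h1, one_mul, stdBasisMatrix_apply',
            if_neg (by rintro ⟨h3, -⟩; exact h2 h3.symm)]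
          simp
      · rw [if_neg h1, zero_mul, mul_zero]
    · intro hmem; exact absurd (Finset.mem_univ _) hmem
  have hR : (∑ w, emb1 i (Matrix.single s t 1) u w * X w v)
      = if u i = s then X (Function.update u i t) v else 0 := by
    rw [Finset.sum_eq_single (Function.update u i t)]
    · rw [emb1_apply, if_pos (fun j hj => (Function.update_of_ne hj _ _).symm),
        Function.update_self, stdBasisMatrix_apply']
      rcases eq_or_ne (u i) s with hus | hus
      · rw [if_pos ⟨hus.symm, rfl⟩, if_pos hus, one_mul, one_mul]
      · rw [if_neg (by rintro ⟨h3, -⟩; exact hus h3.symm), if_neg hus]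
        simp
    · intro w _ hw
      rw [emb1_apply]
      by_cases h1 : ∀ j, j ≠ i → u j = w j
      · by_cases h2 : w i = t
        · have hthis := update_mem_aux h1
          rw [h2] at hthis
          exact absurd hthis hw
        · rw [if_pos h1, one_mul, stdBasisMatrix_apply',
            if_neg (by rintro ⟨-, h3⟩; exact h2 h3.symm)]
          simp
      · rw [if_neg h1, zero_mul, zero_mul]
    · intro hmem; exact absurd (Finset.mem_univ _) hmem
  rw [← hL, ← hR]
  exact h'

lemma comm_scalar (X : QOp r)
    (hX : ∀ (i : Fin r) (c : M2), X * emb1 i c = emb1 i c * X) :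
    ∃ γ : ℂ, X = γ • 1 := by
  have R : ∀ (i : Fin r) (s t : Fin 2) (u v : Fin r → Fin 2),
      (if v i = t then X u (Function.update v i s) else 0)
        = if u i = s then X (Function.update u i t) v else 0 :=
    fun i s t => comm_entry X i s t (hX i _)
  have hoff : ∀ u v, u ≠ v → X u v = 0 := by
    intro u v huv
    obtain ⟨i, hi⟩ := Function.ne_iff.mp huv
    have h := R i (v i) (v i) u v
    rw [if_pos rfl, Function.update_eq_self, if_neg hi] at h
    exact h
  have hstep : ∀ (u : Fin r → Fin 2) (i : Fin r) (t : Fin 2),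
      X u u = X (Function.update u i t) (Function.update u i t) := by
    intro u i t
    have h := R i (u i) t u (Function.update u i t)
    rw [Function.update_self, if_pos rfl, if_pos rfl, Function.update_idem,
      Function.update_eq_self] at h
    exact h
  have hdiag : ∀ (s : Finset (Fin r)) (u v : Fin r → Fin 2),
      (∀ i ∉ s, u i = v i) → X u u = X v v := by
    intro s
    induction s using Finset.induction_on with
    | empty =>
      intro u v h
      have : u = v := funext fun i => h i (Finset.notMem_empty i)
      rw [this]
    | @insert i s hi ih =>
      intro u v h
      rw [hstep u i (v i)]
      apply ih
      intro j hj
      rcases eq_or_ne j i with rfl | hne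
      · rw [Function.update_self]
      · rw [Function.update_of_ne hne]
        exact h j (by simp [hne, hj])
  refine ⟨X (fun _ => 0) (fun _ => 0), ?_⟩
  ext u v
  rcases eq_or_ne u v with rfl | h
  · rw [Matrix.smul_apply, Matrix.one_apply_eq, smul_eq_mul, mul_one]
    exact hdiag Finset.univ u (fun _ => 0) (by simp)
  · rw [hoff u v h, Matrix.smul_apply, Matrix.one_apply_ne h, smul_eq_mul, mul_zero]

end Comm


section TwoByTwo

variable {a b : M2}

lemma noncomm (ha : aᴴ = a) (hb : bᴴ = b)
    (hind : LinearIndependent ℂ ![(1 : M2), a, b]) : a * b ≠ b * a := by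
  intro hcomm
  rw [Fintype.linearIndependent_iff] at hind
  have key : ∀ x y z : ℂ, x • (1 : M2) + y • a + z • b = 0 → (y ≠ 0 ∨ z ≠ 0) → False := by
    intro x y z hrel hnz
    have h0 := hind ![x, y, z] (by
      rw [Fin.sum_univ_three]
      simpa using hrel)
    rcases hnz with h | h
    · exact h (h0 1)
    · exact h (h0 2)
  have e00 := congrFun (congrFun hcomm 0) 0
  have e10 := congrFun (congrFun hcomm 1) 0
  simp only [Matrix.mul_apply, Fin.sum_univ_two] at e00 e10
  have ha01 : a 0 1 = star (a 1 0) := by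
    conv_lhs => rw [← ha]
    rfl
  have hb01 : b 0 1 = star (b 1 0) := by
    conv_lhs => rw [← hb]
    rfl
  -- relation builder: given y z with the right cancellations, build contradiction
  by_cases hd : a 1 0 = 0 ∧ b 1 0 = 0
  · obtain ⟨hA, hB⟩ := hd
    by_cases hdd : a 0 0 = a 1 1 ∧ b 0 0 = b 1 1
    · -- a is a scalar matrix
      apply key (-(a 0 0)) 1 0 ?_ (Or.inl one_ne_zero)
      ext i j
      fin_cases i <;> fin_cases j <;>
        simp [hA, ha01, hdd.1, Matrix.one_apply] <;> ring
    · apply key (-((b 0 0 - b 1 1) * a 0 0 + (-(a 0 0 - a 1 1)) * b 0 0))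
        (b 0 0 - b 1 1) (-(a 0 0 - a 1 1)) ?_ ?_
      · ext i j
        fin_cases i <;> fin_cases j <;>
          simp [hA, hB, ha01, hb01, Matrix.one_apply] <;> ring
      · rcases not_and_or.mp hdd with h | h
        · exact Or.inr (by rw [neg_ne_zero, sub_ne_zero]; exact h)
        · exact Or.inl (by rw [sub_ne_zero]; exact h)
  · -- C1 : a 0 1 * b 1 0 = b 0 1 * a 1 0, C2 : a 1 0 * (b 0 0 - b 1 1) = b 1 0 * (a 0 0 - a 1 1)
    have C1 : a 0 1 * b 1 0 = b 0 1 * a 1 0 := by linear_combination e00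
    have C2 : a 1 0 * (b 0 0 - b 1 1) = b 1 0 * (a 0 0 - a 1 1) := by linear_combination e10
    apply key (-(b 1 0 * a 0 0 + (-(a 1 0)) * b 0 0)) (b 1 0) (-(a 1 0)) ?_ ?_
    · ext i j
      fin_cases i <;> fin_cases j <;> simp [Matrix.one_apply]
      · linear_combination C1
      · ring
      · linear_combination C2
    · rcases not_and_or.mp hd with h | h
      · exact Or.inr (by simpa using h)
      · exact Or.inl h
  
end TwoByTwo


section Traces

variable {I : Type*} [Fintype I]

lemma trace_conjTranspose_mul_self (M : Matrix I I ℂ) :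
    (Mᴴ * M).trace = ((∑ u : I, ∑ v : I, Complex.normSq (M v u) : ℝ) : ℂ) := by
  rw [Matrix.trace]
  push_cast
  refine Finset.sum_congr rfl fun u _ => ?_
  rw [Matrix.diag_apply, Matrix.mul_apply]
  refine Finset.sum_congr rfl fun v _ => ?_
  rw [Matrix.conjTranspose_apply]
  exact Complex.normSq_eq_conj_mul_self.symm

lemma eq_zero_of_sum_normSq (M : Matrix I I ℂ)
    (h : (∑ u : I, ∑ v : I, Complex.normSq (M v u)) = 0) : M = 0 := by
  ext v u
  have h1 := (Finset.sum_eq_zero_iff_of_nonneg (fun u _ =>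
    Finset.sum_nonneg (fun v _ => Complex.normSq_nonneg (M v u)))).mp h u (Finset.mem_univ u)
  have h2 := (Finset.sum_eq_zero_iff_of_nonneg (fun v _ =>
    Complex.normSq_nonneg (M v u))).mp h1 v (Finset.mem_univ v)
  simpa using Complex.normSq_eq_zero.mp h2

lemma eq_zero_of_sum_traces {m : ℕ} (c : Fin m → Matrix I I ℂ)
    (h : (∑ k, ((c k)ᴴ * c k).trace) = 0) : ∀ k, c k = 0 := by
  have h' : (∑ k, ∑ u : I, ∑ v : I, Complex.normSq (c k v u)) = (0:ℝ) := by
    rw [Finset.sum_congr rfl (fun k _ => trace_conjTranspose_mul_self (c k))] at h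
    exact_mod_cast h
  intro k
  apply eq_zero_of_sum_normSq
  exact (Finset.sum_eq_zero_iff_of_nonneg (fun k _ => Finset.sum_nonneg (fun u _ =>
    Finset.sum_nonneg (fun v _ => Complex.normSq_nonneg _)))).mp h' k (Finset.mem_univ k)

lemma trace_mul_conjTranspose_self_ne_zero (M : Matrix I I ℂ) (hM : M ≠ 0) :
    (M * Mᴴ).trace ≠ 0 := by
  rw [Matrix.trace_mul_comm, trace_conjTranspose_mul_self]
  intro h
  exact hM (eq_zero_of_sum_normSq M (by exact_mod_cast h))

end Traces

section Span

variable {a b : M2}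

lemma linIndep4 (ha : aᴴ = a) (hb : bᴴ = b)
    (hind : LinearIndependent ℂ ![(1 : M2), a, b]) :
    LinearIndependent ℂ ![(1 : M2), a, b, a * b - b * a] := by
  set l : M2 := a * b - b * a with hldef
  have hl : l ≠ 0 := sub_ne_zero.mpr (noncomm ha hb hind)
  have hlH : lᴴ = -l := by
    rw [hldef, Matrix.conjTranspose_sub, Matrix.conjTranspose_mul,
      Matrix.conjTranspose_mul, ha, hb]
    rw [neg_sub]
  rw [Fintype.linearIndependent_iff]
  intro g hg
  rw [Fin.sum_univ_four] at hg
  simp only [Matrix.cons_val_zero, Matrix.cons_val_one, Matrix.head_cons,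
    Matrix.cons_val_two, Matrix.tail_cons, Matrix.cons_val_three] at hg
  have t1 : ((1 : M2) * lᴴ).trace = 0 := by
    rw [one_mul, Matrix.trace_conjTranspose, hldef, Matrix.trace_sub,
      Matrix.trace_mul_comm, sub_self, star_zero]
  have t2 : (a * lᴴ).trace = 0 := by
    rw [hlH, Matrix.mul_neg, Matrix.trace_neg, hldef, Matrix.mul_sub, Matrix.trace_sub,
      ← Matrix.mul_assoc, ← Matrix.mul_assoc, Matrix.trace_mul_cycle a b a, sub_self, neg_zero]
  have t3 : (b * lᴴ).trace = 0 := by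
    rw [hlH, Matrix.mul_neg, Matrix.trace_neg, hldef, Matrix.mul_sub, Matrix.trace_sub,
      ← Matrix.mul_assoc, ← Matrix.mul_assoc, Matrix.trace_mul_cycle b a b, sub_self, neg_zero]
  have t4 : (l * lᴴ).trace ≠ 0 := trace_mul_conjTranspose_self_ne_zero l hl
  have h3 : g 3 = 0 := by
    have htr := congrArg (fun M : M2 => (M * lᴴ).trace) hg
    simp only [Matrix.add_mul, Matrix.smul_mul, Matrix.trace_add, Matrix.trace_smul,
      Matrix.zero_mul, Matrix.trace_zero, t1, t2, t3, smul_zero, add_zero, zero_add,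
      smul_eq_mul, mul_zero] at htr
    exact (mul_eq_zero.mp htr).resolve_right t4
  rw [h3, zero_smul, add_zero] at hg
  rw [Fintype.linearIndependent_iff] at hind
  have h012 := hind ![g 0, g 1, g 2] (by rw [Fin.sum_univ_three]; simpa using hg)
  intro i
  fin_cases i
  · exact h012 0
  · exact h012 1
  · exact h012 2
  · exact h3

lemma span4 (ha : aᴴ = a) (hb : bᴴ = b)
    (hind : LinearIndependent ℂ ![(1 : M2), a, b]) (c : M2) :
    c ∈ Submodule.span ℂ ({(1 : M2), a, b, a * b - b * a} : Set M2) := by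
  have htop : Submodule.span ℂ (Set.range ![(1 : M2), a, b, a * b - b * a]) = ⊤ := by
    apply LinearIndependent.span_eq_top_of_card_eq_finrank (linIndep4 ha hb hind)
    rw [Module.finrank_matrix]
    simp
  have hrange : Set.range ![(1 : M2), a, b, a * b - b * a]
      = ({(1 : M2), a, b, a * b - b * a} : Set M2) := by
    ext x
    constructor
    · rintro ⟨i, rfl⟩
      fin_cases i <;> simp
    · rintro (rfl | rfl | rfl | rfl)
      · exact ⟨0, rfl⟩
      · exact ⟨1, rfl⟩
      · exact ⟨2, rfl⟩
      · exact ⟨3, rfl⟩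
  rw [hrange] at htop
  rw [htop]
  trivial

end Span


section Dissip

variable {I : Type*} [Fintype I]

lemma trace_cyc4 (W X Y Z : Matrix I I ℂ) :
    (W * (X * (Y * Z))).trace = (X * (Y * (Z * W))).trace := by
  rw [Matrix.trace_mul_comm W (X * (Y * Z)), Matrix.mul_assoc X (Y * Z) W,
    Matrix.mul_assoc Y Z W]

lemma trace_cyc3 (X Y Z : Matrix I I ℂ) :
    (X * (Y * Z)).trace = (Y * (Z * X)).trace := by
  rw [Matrix.trace_mul_comm X (Y * Z), Matrix.mul_assoc]

lemma trace_mul_dissipator (A L : Matrix I I ℂ) (hA : Aᴴ = A) :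
    (A * dissipator L A).trace
      = -(((L * A - A * L)ᴴ * (L * A - A * L)).trace)
        + (A * (A * (L * Lᴴ - Lᴴ * L))).trace := by
  simp only [dissipator, Matrix.mul_add, Matrix.mul_sub, Matrix.sub_mul, Matrix.add_mul,
    Matrix.conjTranspose_sub, Matrix.conjTranspose_mul, hA, Matrix.trace_add,
    Matrix.trace_sub, Matrix.mul_assoc]
  have h2 : (A * (Lᴴ * (A * L))).trace = (A * (L * (A * Lᴴ))).trace := by
    rw [trace_cyc4, trace_cyc4]
  have h3 : (Lᴴ * (A * (L * A))).trace = (A * (L * (A * Lᴴ))).trace := by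
    rw [trace_cyc4]
  have h4 : (Lᴴ * (A * (A * L))).trace = (A * (A * (L * Lᴴ))).trace := by
    rw [trace_cyc4]
  linear_combination -h2 - h3 + h4

lemma dissipator_smul_one [DecidableEq I] (γ : ℂ) (ρ : Matrix I I ℂ) :
    dissipator (γ • (1 : Matrix I I ℂ)) ρ = 0 := by
  simp only [dissipator, Matrix.conjTranspose_smul, Matrix.conjTranspose_one,
    Matrix.smul_mul, Matrix.mul_smul, one_mul, mul_one, smul_smul]
  rw [mul_comm (star γ) γ]
  abel

end Dissip

lemma emb1_conjTranspose {r : ℕ} (i : Fin r) (c : M2) :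
    (emb1 i c)ᴴ = emb1 i cᴴ := by
  ext u v
  rw [Matrix.conjTranspose_apply, emb1_apply, emb1_apply, Matrix.conjTranspose_apply]
  by_cases h : ∀ j, j ≠ i → u j = v j
  · rw [if_pos h, if_pos (fun j hj => (h j hj).symm), one_mul, one_mul]
  · rw [if_neg h, if_neg (fun hc => h (fun j hj => (hc j hj).symm)), zero_mul, zero_mul,
      star_zero]


section Ring

variable {r : ℕ} {n : ℕ} [NeZero n]

def extf (r : ℕ) {n : ℕ} (u : Fin r → Fin 2) (t : Fin 2) : ZMod n → Fin 2 :=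
  fun s => if h : s.val < r then u ⟨s.val, h⟩ else t

lemma val_coe_fin (hrn : r + 2 ≤ n) (i : Fin r) : ((i.val : ZMod n)).val = i.val :=
  ZMod.val_cast_of_lt (by have := i.isLt; omega)

lemma window_iff (hrn : r + 2 ≤ n) (s : ZMod n) :
    (∃ i : Fin r, s = 0 + ((i.val : ℕ) : ZMod n)) ↔ s.val < r := by
  constructor
  · rintro ⟨i, rfl⟩
    rw [zero_add, val_coe_fin hrn]
    exact i.isLt
  · intro h
    refine ⟨⟨s.val, h⟩, ?_⟩
    rw [zero_add]
    exact (by rw [ZMod.natCast_val, ZMod.cast_id] : ((s.val : ZMod n) = s)).symm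

lemma extf_coe (hrn : r + 2 ≤ n) (u : Fin r → Fin 2) (t : Fin 2) (i : Fin r) :
    extf r u t ((i.val : ℕ) : ZMod n) = u i := by
  unfold extf
  rw [dif_pos (by rw [val_coe_fin hrn]; exact i.isLt)]
  exact congrArg u (Fin.ext (val_coe_fin hrn i))

lemma extf_out (u : Fin r → Fin 2) (t : Fin 2) (s : ZMod n) (h : ¬ s.val < r) :
    extf r u t s = t := dif_neg h

lemma patch_extf (hrn : r + 2 ≤ n) (u : Fin r → Fin 2) (t : Fin 2) (v : Fin r → Fin 2) :
    patch r (0 : ZMod n) (extf r u t) v = extf r v t := by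
  funext s
  unfold patch
  by_cases h : ∃ i : Fin r, s = 0 + ((i.val : ℕ) : ZMod n)
  · rw [dif_pos h]
    have hlt : s.val < r := (window_iff hrn s).mp h
    have hs2 : s.val = h.choose.val := by
      have hcs := h.choose_spec
      rw [zero_add] at hcs
      have h2 := val_coe_fin hrn h.choose
      rw [← hcs] at h2
      exact h2.symm ▸ rfl
    unfold extf
    rw [dif_pos hlt]
    exact (congrArg v (Fin.ext hs2)).symm
  · rw [dif_neg h]
    have hs : ¬ s.val < r := fun hc => h ((window_iff hrn s).mpr hc)
    rw [extf_out u t s hs, extf_out v t s hs]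

lemma prod_window (hrn : r + 2 ≤ n) (f : ZMod n → ℂ)
    (hf : ∀ s : ZMod n, ¬ s.val < r → f s = 1) :
    (∏ s : ZMod n, f s) = ∏ i : Fin r, f ((i.val : ℕ) : ZMod n) := by
  classical
  have himg : ∀ s : ZMod n,
      s ∈ Finset.univ.image (fun i : Fin r => ((i.val : ℕ) : ZMod n)) ↔ s.val < r := by
    intro s
    rw [Finset.mem_image]
    constructor
    · rintro ⟨i, -, rfl⟩
      rw [val_coe_fin hrn]
      exact i.isLt
    · intro h
      exact ⟨⟨s.val, h⟩, Finset.mem_univ _, by rw [ZMod.natCast_val, ZMod.cast_id]⟩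
  have h1 : (∏ s : ZMod n, f s)
      = ∏ s ∈ Finset.univ.image (fun i : Fin r => ((i.val : ℕ) : ZMod n)), f s :=
    (Finset.prod_subset (Finset.subset_univ _)
      (fun s _ hs => hf s (fun hc => hs ((himg s).mpr hc)))).symm
  rw [h1, Finset.prod_image]
  intro i _ j _ hij
  exact Fin.ext (by simp only at hij; rw [← val_coe_fin hrn i, hij, val_coe_fin hrn])

lemma embMap_extf (hrn : r + 2 ≤ n) (𝓛 : QOp r → QOp r) (M : ROp n)
    (u u' : Fin r → Fin 2) (t : Fin 2) :
    embMap r 0 𝓛 M (extf r u t) (extf r u' t)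
      = 𝓛 (Matrix.of fun v v' => M (extf r v t) (extf r v' t)) u u' := by
  have hprod : (∏ s : ZMod n, if ∃ i : Fin r, s = 0 + ((i.val : ℕ) : ZMod n) then (1:ℂ)
      else if extf r u t s = extf r u' t s then 1 else 0) = 1 := by
    apply Finset.prod_eq_one
    intro s _
    by_cases h : ∃ i : Fin r, s = 0 + ((i.val : ℕ) : ZMod n)
    · rw [if_pos h]
    · have hs : ¬ s.val < r := fun hc => h ((window_iff hrn s).mpr hc)
      rw [if_neg h, extf_out u t s hs, extf_out u' t s hs, if_pos rfl]
  have harg : ∀ w : Fin r → Fin 2,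
      (fun i : Fin r => extf (n := n) r w t (0 + ((i.val : ℕ) : ZMod n))) = w := by
    intro w
    funext i
    rw [zero_add, extf_coe hrn]
  simp only [embMap, Matrix.of_apply]
  rw [hprod, one_mul]
  simp only [patch_extf hrn]
  rw [harg u, harg u']

lemma inner_win (hrn : r + 2 ≤ n) (c : M2) (i₀ : Fin r) (t : Fin 2) :
    (Matrix.of fun v v' : Fin r → Fin 2 =>
        embSite (n := n) ((i₀.val : ℕ) : ZMod n) c (extf r v t) (extf r v' t)) = emb1 i₀ c := by
  ext v v'
  simp only [Matrix.of_apply, embSite, emb1]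
  rw [extf_coe hrn, extf_coe hrn]
  congr 1
  rw [prod_window hrn _ (fun s hs => ?_)]
  · refine Finset.prod_congr rfl fun i _ => ?_
    have hiff : (((i.val : ℕ) : ZMod n) = ((i₀.val : ℕ) : ZMod n)) ↔ i = i₀ := by
      constructor
      · intro h
        exact Fin.ext (by rw [← val_coe_fin hrn i, h, val_coe_fin hrn])
      · rintro rfl; rfl
    rw [extf_coe hrn, extf_coe hrn]
    exact if_congr hiff rfl rfl
  · have hne : ¬ s = ((i₀.val : ℕ) : ZMod n) := fun hc => hs (by
      rw [hc, val_coe_fin hrn]; exact i₀.isLt)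
    rw [if_neg hne, extf_out _ _ _ hs, extf_out _ _ _ hs, if_pos rfl]

lemma inner_out (hrn : r + 2 ≤ n) (c : M2) (t : Fin 2) :
    (Matrix.of fun v v' : Fin r → Fin 2 =>
        embSite (n := n) ((r : ℕ) : ZMod n) c (extf r v t) (extf r v' t))
      = c t t • (1 : QOp r) := by
  ext v v'
  simp only [Matrix.of_apply, embSite, Matrix.smul_apply, Matrix.one_apply, smul_eq_mul]
  have hrval : (((r : ℕ) : ZMod n)).val = r := ZMod.val_cast_of_lt (by omega)
  have hout : ¬ (((r : ℕ) : ZMod n)).val < r := by rw [hrval]; omega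
  rw [extf_out _ _ _ hout, extf_out _ _ _ hout]
  have hp : (∏ s : ZMod n, if s = ((r : ℕ) : ZMod n) then (1:ℂ)
      else if extf r v t s = extf r v' t s then 1 else 0) = if v = v' then 1 else 0 := by
    rw [prod_window hrn _ (fun s hs => ?_)]
    · rw [← delta_prod v v']
      refine Finset.prod_congr rfl fun i _ => ?_
      have hne : ¬ ((i.val : ℕ) : ZMod n) = ((r : ℕ) : ZMod n) := fun hc => by
        have h2 := congrArg ZMod.val hc
        rw [val_coe_fin hrn, hrval] at h2
        have := i.isLt
        omega
      rw [if_neg hne, extf_coe hrn, extf_coe hrn]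
    · by_cases hsr : s = ((r : ℕ) : ZMod n)
      · rw [if_pos hsr]
      · rw [if_neg hsr, extf_out _ _ _ hs, extf_out _ _ _ hs, if_pos rfl]
  rw [hp, mul_comm]

end Ring

end Stmt5



open Stmt5

/-- it is impossible to locally conserve two (together with 𝟙) linearly
independent Hermitian single-site operators by a nontrivial translationally invariant
`r`-local Lindblad equation. -/
theorem stmt5 (r : ℕ) (hr : 1 ≤ r) (n : ℕ) [NeZero n] (hn : r + 2 ≤ n)
    (a b : Matrix (Fin 2) (Fin 2) ℂ) (ha : a.IsHermitian) (hb : b.IsHermitian)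
    (hind : LinearIndependent ℂ ![(1 : Matrix (Fin 2) (Fin 2) ℂ), a, b])
    (𝓛 : QOp r → QOp r) (hL : IsLindblad 𝓛)
    (hca : ∀ j k : ZMod n, embMap r j 𝓛 (embSite k a) = 0)
    (hcb : ∀ j k : ZMod n, embMap r j 𝓛 (embSite k b) = 0) :
    ∀ ρ, 𝓛 ρ = 0 := by
  classical
  obtain ⟨H, hH, m, Ls, hform⟩ := hL
  have Lsmul : ∀ (z : ℂ) (ρ : QOp r), 𝓛 (z • ρ) = z • 𝓛 ρ := by
    intro z ρ
    rw [hform, hform, smul_add, Finset.smul_sum]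
    congr 1
    · rw [Matrix.smul_mul, Matrix.mul_smul, ← smul_sub, smul_comm]
    · refine Finset.sum_congr rfl fun k _ => ?_
      simp only [dissipator, Matrix.smul_mul, Matrix.mul_smul, smul_sub, smul_add]
  -- window conservation
  have hwindow : ∀ (c : Matrix (Fin 2) (Fin 2) ℂ),
      (∀ j k : ZMod n, embMap r j 𝓛 (embSite k c) = 0) →
      ∀ i : Fin r, 𝓛 (emb1 i c) = 0 := by
    intro c hc i
    ext u u'
    have h0 := congrFun (congrFun (hc 0 ((i.val : ℕ) : ZMod n)) (extf r u 0)) (extf r u' 0)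
    rw [Matrix.zero_apply] at h0
    rw [embMap_extf hn 𝓛 _ u u' 0, inner_win hn c i 0] at h0
    exact h0
  have hKa := hwindow a hca
  have hKb := hwindow b hcb
  have hK1cond : ∀ t : Fin 2, (a t t ≠ 0 ∨ b t t ≠ 0) → 𝓛 1 = 0 := by
    have key : ∀ (c : Matrix (Fin 2) (Fin 2) ℂ),
        (∀ j k : ZMod n, embMap r j 𝓛 (embSite k c) = 0) →
        ∀ t : Fin 2, c t t ≠ 0 → 𝓛 1 = 0 := by
      intro c hc t hct
      have h0 : 𝓛 (c t t • (1 : QOp r)) = 0 := by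
        ext u u'
        have h1 := congrFun (congrFun (hc 0 ((r : ℕ) : ZMod n)) (extf r u t)) (extf r u' t)
        rw [Matrix.zero_apply] at h1
        rw [embMap_extf hn 𝓛 _ u u' t, inner_out hn c t] at h1
        exact h1
      rw [Lsmul] at h0
      exact (smul_eq_zero.mp h0).resolve_left hct
    intro t ht
    rcases ht with h | h
    · exact key a hca t h
    · exact key b hcb t h
  set C : QOp r := ∑ k, (Ls k * (Ls k)ᴴ - (Ls k)ᴴ * Ls k) with hC
  have htrC0 : C.trace = 0 := by
    rw [hC, Matrix.trace_sum]
    refine Finset.sum_eq_zero fun k _ => ?_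
    rw [Matrix.trace_sub, Matrix.trace_mul_comm, sub_self]
  have hL1 : 𝓛 1 = C + C := by
    rw [hform]
    simp only [one_mul, mul_one, sub_self, smul_zero, zero_add, dissipator]
    rw [hC, ← Finset.sum_add_distrib]
    try rfl
    try (refine Finset.sum_congr rfl fun k _ => ?_; abel)
  have hcomm : ∀ (A : QOp r), Aᴴ = A → 𝓛 A = 0 → (A * (A * C)).trace = 0 →
      ∀ k, Ls k * A = A * Ls k := by
    intro A hA h0 htr
    have hH0 : (A * (Complex.I • (A * H - H * A))).trace = 0 := by
      rw [Matrix.mul_smul, Matrix.trace_smul, Matrix.mul_sub, Matrix.trace_sub,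
        trace_cyc3 A A H, sub_self, smul_zero]
    have h1 : (A * 𝓛 A).trace = 0 := by rw [h0, Matrix.mul_zero, Matrix.trace_zero]
    rw [hform, Matrix.mul_add, Matrix.trace_add, hH0, zero_add, Matrix.mul_sum,
      Matrix.trace_sum] at h1
    rw [Finset.sum_congr rfl (fun k _ => trace_mul_dissipator A (Ls k) hA)] at h1
    rw [Finset.sum_add_distrib] at h1
    have hy : (∑ k, (A * (A * (Ls k * (Ls k)ᴴ - (Ls k)ᴴ * Ls k))).trace)
        = (A * (A * C)).trace := by
      rw [hC, Matrix.mul_sum, Matrix.mul_sum, Matrix.trace_sum]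
    rw [hy, htr, add_zero] at h1
    have hsum : (∑ k, ((Ls k * A - A * Ls k)ᴴ * (Ls k * A - A * Ls k)).trace) = 0 := by
      rw [Finset.sum_neg_distrib] at h1
      exact neg_eq_zero.mp h1
    intro k
    have h3 := eq_zero_of_sum_traces (fun k => Ls k * A - A * Ls k) hsum k
    exact sub_eq_zero.mp h3
  -- case analysis for the trace condition
  have hOr : (a 0 0 = 0 ∧ a 1 1 = 0 ∧ b 0 0 = 0 ∧ b 1 1 = 0) ∨ C = 0 := by
    by_cases hz : a 0 0 = 0 ∧ a 1 1 = 0 ∧ b 0 0 = 0 ∧ b 1 1 = 0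
    · exact Or.inl hz
    · right
      have h1 : 𝓛 1 = 0 := by
        rcases not_and_or.mp hz with h | h'
        · exact hK1cond 0 (Or.inl h)
        · rcases not_and_or.mp h' with h | h'
          · exact hK1cond 1 (Or.inl h)
          · rcases not_and_or.mp h' with h | h
            · exact hK1cond 0 (Or.inr h)
            · exact hK1cond 1 (Or.inr h)
      rw [hL1] at h1
      have h2 : (2 : ℂ) • C = 0 := by rw [two_smul]; exact h1
      exact (smul_eq_zero.mp h2).resolve_left (by norm_num)
  have hstep : ∀ (c : Matrix (Fin 2) (Fin 2) ℂ), cᴴ = c → (∀ i, 𝓛 (emb1 i c) = 0) →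
      (c 0 0 = 0 ∧ c 1 1 = 0 ∨ C = 0) →
      ∀ (k : Fin m) (i : Fin r), Ls k * emb1 i c = emb1 i c * Ls k := by
    intro c hc hker hcase k i
    apply hcomm (emb1 i c) (by rw [emb1_conjTranspose, hc]) (hker i) ?_ k
    rcases hcase with ⟨h00, h11⟩ | hC0
    · have hcc : c * c = (c 0 1 * c 1 0) • (1 : Matrix (Fin 2) (Fin 2) ℂ) := by
        ext p q
        fin_cases p <;> fin_cases q <;>
          simp [Matrix.mul_apply, Fin.sum_univ_two, h00, h11, Matrix.one_apply] <;> ring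
      rw [← Matrix.mul_assoc, emb1_mul, hcc, emb1_smul, emb1_one, Matrix.smul_mul, one_mul,
        Matrix.trace_smul, htrC0, smul_zero]
    · rw [hC0, Matrix.mul_zero, Matrix.mul_zero, Matrix.trace_zero]
  have hLsa : ∀ (k : Fin m) (i : Fin r), Ls k * emb1 i a = emb1 i a * Ls k :=
    hstep a ha hKa (hOr.imp (fun h => ⟨h.1, h.2.1⟩) id)
  have hLsb : ∀ (k : Fin m) (i : Fin r), Ls k * emb1 i b = emb1 i b * Ls k :=
    hstep b hb hKb (hOr.imp (fun h => ⟨h.2.2.1, h.2.2.2⟩) id)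
  -- everything commuting with all emb1 i a, emb1 i b is scalar
  have hmulmul : ∀ (X A B : QOp r), X * A = A * X → X * B = B * X → X * (A * B) = (A * B) * X := by
    intro X A B h1 h2
    rw [← Matrix.mul_assoc, h1, Matrix.mul_assoc, h2, ← Matrix.mul_assoc]
  have hcommall : ∀ (X : QOp r), (∀ i, X * emb1 i a = emb1 i a * X) →
      (∀ i, X * emb1 i b = emb1 i b * X) → ∃ γ : ℂ, X = γ • 1 := by
    intro X hXa hXb
    apply comm_scalar
    intro i c
    have hmem := span4 ha hb hind c
    refine Submodule.span_induction ?_ ?_ ?_ ?_ hmem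
    · intro x hx
      simp only [Set.mem_insert_iff, Set.mem_singleton_iff] at hx
      rcases hx with rfl | rfl | rfl | rfl
      · rw [emb1_one, one_mul, mul_one]
      · exact hXa i
      · exact hXb i
      · rw [emb1_sub, ← emb1_mul, ← emb1_mul, Matrix.mul_sub, Matrix.sub_mul,
          hmulmul X _ _ (hXa i) (hXb i), hmulmul X _ _ (hXb i) (hXa i)]
    · rw [emb1_zero, Matrix.mul_zero, Matrix.zero_mul]
    · intro x y _ _ hx hy
      rw [emb1_add, Matrix.mul_add, Matrix.add_mul, hx, hy]
    · intro z x _ hx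
      rw [emb1_smul, Matrix.mul_smul, Matrix.smul_mul, hx]
  have hscal : ∀ k : Fin m, ∃ γ : ℂ, Ls k = γ • 1 :=
    fun k => hcommall (Ls k) (fun i => hLsa k i) (fun i => hLsb k i)
  have hdiss0 : ∀ ρ : QOp r, (∑ k, dissipator (Ls k) ρ) = 0 := by
    intro ρ
    refine Finset.sum_eq_zero fun k _ => ?_
    obtain ⟨γ, hγ⟩ := hscal k
    rw [hγ, dissipator_smul_one]
  have hform' : ∀ ρ : QOp r, 𝓛 ρ = Complex.I • (ρ * H - H * ρ) := fun ρ => by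
    rw [hform, hdiss0, add_zero]
  have hHcomm : ∀ i : Fin r, H * emb1 i a = emb1 i a * H := by
    intro i
    have h0 := hKa i
    rw [hform'] at h0
    have h1 : emb1 i a * H - H * emb1 i a = 0 :=
      (smul_eq_zero.mp h0).resolve_left Complex.I_ne_zero
    exact (sub_eq_zero.mp h1).symm
  have hHcommb : ∀ i : Fin r, H * emb1 i b = emb1 i b * H := by
    intro i
    have h0 := hKb i
    rw [hform'] at h0
    have h1 : emb1 i b * H - H * emb1 i b = 0 :=
      (smul_eq_zero.mp h0).resolve_left Complex.I_ne_zero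
    exact (sub_eq_zero.mp h1).symm
  obtain ⟨γ, hγ⟩ := hcommall H hHcomm hHcommb
  intro ρ
  rw [hform', hγ, Matrix.mul_smul, Matrix.smul_mul, mul_one, one_mul, sub_self, smul_zero]
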